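/- arXiv:2603.16396 — 2 statements merged into one kernel-verified Lean document; each statement's English description precedes it below -/
import Mathlib

section
/- For every integer n ≥ 3, the girth of the graph G_n equals 4 (i.e., the minimum length of a cycle in G_n, as an extended natural number, is 4). -/
open SimpleGraph

/-- The edge set of the Petersen graph on `Fin 10`, as a finset of unordered pairs. -/
def petersenEdges : Finset (Sym2 (Fin 10)) :=
  {s(0,1), s(1,2), s(2,3), s(3,4), s(0,4), s(0,5), s(1,6), s(2,7),
   s(3,8), s(4,9), s(5,7), s(7,9), s(6,9), s(6,8), s(5,8)}

/-- The fixed orientation `D` of the Petersen edges. -/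
def dirD : Finset (Fin 10 × Fin 10) :=
  {(0,1), (0,4), (0,5), (1,2), (1,6), (2,3), (2,7), (3,4),
   (3,8), (4,9), (5,7), (5,8), (6,8), (6,9), (7,9)}

lemma petersen_irrefl : ∀ x : Fin 10, s(x,x) ∉ petersenEdges := by decide

lemma dirD_irrefl : ∀ x : Fin 10, (x,x) ∉ dirD := by decide

/-- The graph `G n`: `n` copies of the Petersen graph, cross-wired by the `n`-cycle
according to the orientation `dirD`. -/
def G (n : ℕ) : SimpleGraph (ZMod n × Fin 10) where
  Adj p q :=
    (p.1 = q.1 ∧ s(p.2, q.2) ∈ petersenEdges) ∨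
    (q.1 = p.1 + 1 ∧ (p.2, q.2) ∈ dirD) ∨
    (p.1 = q.1 + 1 ∧ (q.2, p.2) ∈ dirD)
  symm := by
    refine ⟨?_⟩
    rintro ⟨i, x⟩ ⟨j, y⟩ (⟨h1, h2⟩ | ⟨h1, h2⟩ | ⟨h1, h2⟩)
    · exact Or.inl ⟨h1.symm, by rwa [Sym2.eq_swap]⟩
    · exact Or.inr (Or.inr ⟨h1, h2⟩)
    · exact Or.inr (Or.inl ⟨h1, h2⟩)
  loopless := by
    refine ⟨?_⟩
    rintro ⟨i, x⟩ (⟨_, h2⟩ | ⟨_, h2⟩ | ⟨_, h2⟩)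
    · exact petersen_irrefl x h2
    · exact dirD_irrefl x h2
    · exact dirD_irrefl x h2

lemma petersen_tri : ∀ x y z : Fin 10, s(x,y) ∈ petersenEdges → s(y,z) ∈ petersenEdges →
    s(z,x) ∈ petersenEdges → False := by decide

lemma dirD_sub : ∀ a b : Fin 10, (a,b) ∈ dirD → s(a,b) ∈ petersenEdges := by decide

lemma adj_proj {n : ℕ} {p q : ZMod n × Fin 10} (h : (G n).Adj p q) :
    s(p.2, q.2) ∈ petersenEdges := by
  rcases h with ⟨_, h⟩ | ⟨_, h⟩ | ⟨_, h⟩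
  · exact h
  · exact dirD_sub _ _ h
  · rw [Sym2.eq_swap]; exact dirD_sub _ _ h

/-- **Theorem 3.3 (girth).** For every `n ≥ 3`, the girth of `G n` equals 4. -/
theorem Gn_girth_eq_four (n : ℕ) (hn : 3 ≤ n) : (G n).girth = 4 := by
  haveI : Fact (1 < n) := ⟨by omega⟩
  have h01 : (0 : ZMod n) ≠ 1 := zero_ne_one
  -- the explicit 4-cycle
  have e1 : (G n).Adj ((0 : ZMod n), (0 : Fin 10)) (0, 1) := Or.inl ⟨rfl, show s((0:Fin 10),1) ∈ petersenEdges by decide⟩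
  have e2 : (G n).Adj ((0 : ZMod n), (1 : Fin 10)) (1, 2) :=
    Or.inr (Or.inl ⟨(zero_add 1).symm, show ((1:Fin 10),2) ∈ dirD by decide⟩)
  have e3 : (G n).Adj ((1 : ZMod n), (2 : Fin 10)) (1, 1) :=
    Or.inl ⟨rfl, show s((2:Fin 10),1) ∈ petersenEdges by decide⟩
  have e4 : (G n).Adj ((1 : ZMod n), (1 : Fin 10)) (0, 0) :=
    Or.inr (Or.inr ⟨(zero_add 1).symm, show ((0:Fin 10),1) ∈ dirD by decide⟩)
  let w : (G n).Walk ((0 : ZMod n), (0 : Fin 10)) ((0 : ZMod n), (0 : Fin 10)) :=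
    Walk.cons e1 (Walk.cons e2 (Walk.cons e3 (Walk.cons e4 Walk.nil)))
  have hcyc : w.IsCycle := by
    simp only [w, Walk.isCycle_def, Walk.isTrail_def, Walk.edges_cons, Walk.edges_nil,
      Walk.support_cons, Walk.support_nil, List.tail_cons]
    refine ⟨?_, by simp, ?_⟩ <;>
      simp [List.nodup_cons, Sym2.eq, Sym2.rel_iff', Prod.ext_iff, h01, h01.symm]
  have hup : (G n).egirth ≤ 4 := by
    rw [SimpleGraph.egirth]
    refine iInf_le_of_le ((0 : ZMod n), (0 : Fin 10)) (iInf_le_of_le w (iInf_le_of_le hcyc ?_))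
    norm_num [w]
  have hlow : 4 ≤ (G n).egirth := by
    rw [le_egirth]
    intro a c hc
    by_contra hlt
    push_neg at hlt
    have h3 := hc.three_le_length
    have hlen : c.length = 3 := by
      have : (c.length : ℕ∞) < 4 := hlt
      have : c.length < 4 := by exact_mod_cast this
      omega
    clear hc hlt h3
    cases c with
    | nil => simp at hlen
    | cons a1 c =>
      cases c with
      | nil => simp at hlen
      | cons a2 c =>
        cases c with
        | nil => simp at hlen
        | cons a3 c =>
          cases c with
          | cons a4 c => simp [Walk.length_cons] at hlen
          | nil => exact petersen_tri _ _ _ (adj_proj a1) (adj_proj a2) (adj_proj a3)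
  have hegirth : (G n).egirth = 4 := le_antisymm hup hlow
  rw [SimpleGraph.girth, hegirth]
  rfl
end

section
/- For every n ∈ {3, 4, 5, 6, 7}, the graph G_n is not strongly regular: there exist no natural numbers ℓ and μ such that G_n is strongly regular with parameters (10n, 6, ℓ, μ), i.e., such that G_n has 10n vertices, is 6-regular, every pair of adjacent vertices has exactly ℓ common neighbors, and every pair of distinct non-adjacent vertices has exactly μ common neighbors. -/
open SimpleGraph

instance Gadj_dec (n : ℕ) : DecidableRel (G n).Adj := fun p q =>
  inferInstanceAs (Decidable ((p.1 = q.1 ∧ s(p.2, q.2) ∈ petersenEdges) ∨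
    (q.1 = p.1 + 1 ∧ (p.2, q.2) ∈ dirD) ∨ (p.1 = q.1 + 1 ∧ (q.2, p.2) ∈ dirD)))

lemma key (n : ℕ) [NeZero n]
    (h1 : Fintype.card ((G n).commonNeighbors ((0 : ZMod n), (0 : Fin 10)) (0, 2)) = 1)
    (h2 : Fintype.card ((G n).commonNeighbors ((0 : ZMod n), (0 : Fin 10)) (0, 3)) = 2)
    (hne1 : ((0 : ZMod n), (0 : Fin 10)) ≠ (0, 2)) (hna1 : ¬ (G n).Adj (0, 0) (0, 2))
    (hne2 : ((0 : ZMod n), (0 : Fin 10)) ≠ (0, 3)) (hna2 : ¬ (G n).Adj (0, 0) (0, 3)) :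
    ¬ ∃ ℓ μ : ℕ,
        Nat.card (ZMod n × Fin 10) = 10 * n ∧
        (∀ v : ZMod n × Fin 10, Nat.card ((G n).neighborSet v) = 6) ∧
        (∀ u v : ZMod n × Fin 10, (G n).Adj u v →
          Nat.card ((G n).commonNeighbors u v) = ℓ) ∧
        (∀ u v : ZMod n × Fin 10, u ≠ v → ¬ (G n).Adj u v →
          Nat.card ((G n).commonNeighbors u v) = μ) := by
  rintro ⟨ℓ, μ, -, -, -, hμ⟩
  have a1 := hμ _ _ hne1 hna1
  have a2 := hμ _ _ hne2 hna2
  rw [Nat.card_eq_fintype_card, h1] at a1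
  rw [Nat.card_eq_fintype_card, h2] at a2
  omega

/-- For every `n ∈ {3, 4, 5, 6, 7}`, the graph `G n` is not strongly regular: there are no
natural numbers `ℓ`, `μ` such that `G n` has `10 n` vertices, is 6-regular, every pair of
adjacent vertices has exactly `ℓ` common neighbors, and every pair of distinct non-adjacent
vertices has exactly `μ` common neighbors. -/
theorem Gn_not_strongly_regular :
    ∀ n ∈ ({3, 4, 5, 6, 7} : Set ℕ),
      ¬ ∃ ℓ μ : ℕ,
          Nat.card (ZMod n × Fin 10) = 10 * n ∧
          (∀ v : ZMod n × Fin 10, Nat.card ((G n).neighborSet v) = 6) ∧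
          (∀ u v : ZMod n × Fin 10, (G n).Adj u v →
            Nat.card ((G n).commonNeighbors u v) = ℓ) ∧
          (∀ u v : ZMod n × Fin 10, u ≠ v → ¬ (G n).Adj u v →
            Nat.card ((G n).commonNeighbors u v) = μ) := by
  intro n hn
  simp only [Set.mem_insert_iff, Set.mem_singleton_iff] at hn
  rcases hn with rfl | rfl | rfl | rfl | rfl
  · exact key 3 (by decide) (by decide) (by decide) (by decide) (by decide) (by decide)
  · exact key 4 (by decide) (by decide) (by decide) (by decide) (by decide) (by decide)
  · exact key 5 (by decide) (by decide) (by decide) (by decide) (by decide) (by decide)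
  · exact key 6 (by decide) (by decide) (by decide) (by decide) (by decide) (by decide)
  · exact key 7 (by decide) (by decide) (by decide) (by decide) (by decide) (by decide)
end
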